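/- If f, g ∈ ℂ[X,Y] are quasi-convenient polynomials of positive degree, then ν∞(f,g) := Area(Δ∞(fg)) − Area(Δ∞(f)) − Area(Δ∞(g)) ≥ 0. -/

import Mathlib

open MvPolynomial MeasureTheory Pointwise

noncomputable section

/-- Polynomials in two complex variables. -/
abbrev P2 := MvPolynomial (Fin 2) ℂ

/-- The `w`-weight of a monomial exponent. -/
def wt (w : ℝ × ℝ) (m : Fin 2 →₀ ℕ) : ℝ := w.1 * (m 0 : ℝ) + w.2 * (m 1 : ℝ)

/-- `d_w(f)`: maximal `w`-weight of a monomial of `f`. -/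
def dw (w : ℝ × ℝ) (f : P2) : ℝ := sSup (wt w '' (f.support : Set (Fin 2 →₀ ℕ)))

open Classical in
/-- The initial form `init(f, w)`: sum of the monomials of `f` of maximal `w`-weight. -/
def initForm (w : ℝ × ℝ) (f : P2) : P2 :=
  ∑ m ∈ f.support, if wt w m = dw w f then monomial m (f.coeff m) else 0

/-- `f` is quasi-convenient: some pure power of `X` and some pure power of `Y`
occur in `f` with nonzero coefficient. -/
def QuasiConvenient (f : P2) : Prop :=
  (∃ a : ℕ, f.coeff (Finsupp.single 0 a) ≠ 0) ∧
  (∃ b : ℕ, f.coeff (Finsupp.single 1 b) ≠ 0)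

/-- The Newton diagram at infinity `Δ∞(f)`. -/
def newton (f : P2) : Set (ℝ × ℝ) :=
  convexHull ℝ ({(0, 0)} ∪ {p : ℝ × ℝ | ∃ m ∈ f.support, p = ((m 0 : ℝ), (m 1 : ℝ))})

/-- Area (2-dimensional Lebesgue measure) of a plane set. -/
def area (S : Set (ℝ × ℝ)) : ℝ := (volume S).toReal

/-- `ν∞(f, g)`. -/
def nuInf (f g : P2) : ℝ := area (newton (f * g)) - area (newton f) - area (newton g)

/-- `f` is nondegenerate at infinity. -/
def NondegAtInf (f : P2) : Prop :=
  ∀ w : ℝ × ℝ, (0 < w.1 ∨ 0 < w.2) →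
    ¬ ∃ x y : ℂ, x ≠ 0 ∧ y ≠ 0 ∧
      eval ![x, y] (initForm w f) = 0 ∧
      eval ![x, y] (pderiv 0 (initForm w f)) = 0 ∧
      eval ![x, y] (pderiv 1 (initForm w f)) = 0

/-- The pair `(f, g)` is nondegenerate at infinity. -/
def PairNondegAtInf (f g : P2) : Prop :=
  ∀ w : ℝ × ℝ, (0 < w.1 ∨ 0 < w.2) →
    ¬ ∃ x y : ℂ, x ≠ 0 ∧ y ≠ 0 ∧
      eval ![x, y] (initForm w f) = 0 ∧ eval ![x, y] (initForm w g) = 0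

/-- `g` and `h` have no common nonunit factor. -/
def CoprimeDiv (g h : P2) : Prop := ∀ d : P2, d ∣ g → d ∣ h → IsUnit d

/-- `f` is nearly irreducible: positive degree, and any two nonconstant factors
have a common zero in `ℂ²`. -/
def NearlyIrreducible (f : P2) : Prop :=
  0 < f.totalDegree ∧
  ∀ g h : P2, g ∣ f → h ∣ f → 0 < g.totalDegree → 0 < h.totalDegree →
    ∃ x y : ℂ, eval ![x, y] g = 0 ∧ eval ![x, y] h = 0

/-- The maximal ideal of polynomials vanishing at a point `P ∈ ℂ²`. -/
def mIdeal (Pt : ℂ × ℂ) : Ideal P2 := RingHom.ker (eval ![Pt.1, Pt.2] : P2 →+* ℂ)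

instance (Pt : ℂ × ℂ) : (mIdeal Pt).IsPrime := RingHom.ker_isPrime _

/-- Intersection multiplicity `(f, g)_P`: the `ℂ`-dimension of the quotient of the
local ring of `ℂ²` at `P` by the ideal generated by `f` and `g`. -/
def interMult (f g : P2) (Pt : ℂ × ℂ) : ℕ :=
  Module.finrank ℂ
    (Localization.AtPrime (mIdeal Pt) ⧸
      Ideal.span {algebraMap P2 (Localization.AtPrime (mIdeal Pt)) f,
                  algebraMap P2 (Localization.AtPrime (mIdeal Pt)) g})

/-! ### Auxiliary machinery for `stmt4` -/

/-- The lattice point of an exponent. -/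
def toPt (m : Fin 2 →₀ ℕ) : ℝ × ℝ := ((m 0 : ℝ), (m 1 : ℝ))

lemma toPt_add (m n : Fin 2 →₀ ℕ) : toPt (m + n) = toPt m + toPt n := by
  simp [toPt, Prod.ext_iff]

lemma toPt_inj {m n : Fin 2 →₀ ℕ} (h : toPt m = toPt n) : m = n := by
  rw [toPt, toPt, Prod.mk.injEq] at h
  ext i
  fin_cases i
  · exact_mod_cast h.1
  · exact_mod_cast h.2

/-- The support points of a polynomial. -/
def Spt (f : P2) : Set (ℝ × ℝ) := toPt '' ↑f.support

lemma newton_eq (f : P2) : newton f = convexHull ℝ ({0} ∪ Spt f) := by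
  unfold newton Spt
  congr 1
  congr 1
  ext p
  simp only [Set.mem_image, Finset.mem_coe, Set.mem_setOf_eq]
  constructor
  · rintro ⟨m, hm, rfl⟩
    exact ⟨m, hm, rfl⟩
  · rintro ⟨m, hm, rfl⟩
    exact ⟨m, hm, rfl⟩

lemma zero_mem_newton (f : P2) : (0 : ℝ × ℝ) ∈ newton f := by
  rw [newton_eq]
  exact subset_convexHull ℝ _ (Set.mem_union_left _ rfl)

lemma convex_newton (f : P2) : Convex ℝ (newton f) := by
  rw [newton_eq]; exact convex_convexHull ℝ _

lemma newton_isCompact (f : P2) : IsCompact (newton f) := by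
  rw [newton_eq]
  exact ((Set.finite_singleton _).union ((f.support.finite_toSet).image toPt)).isCompact_convexHull ℝ

lemma toPt_single0 (k : ℕ) : toPt (Finsupp.single 0 k) = ((k : ℝ), 0) := by
  simp [toPt, Finsupp.single_apply]

lemma toPt_single1 (k : ℕ) : toPt (Finsupp.single 1 k) = (0, (k : ℝ)) := by
  simp [toPt, Finsupp.single_apply]

/-- Extreme points of the Minkowski sum of Newton polytopes are support points of the product. -/
lemma extreme_mem_spt (f g : P2) :
    (convexHull ℝ (Spt f) + convexHull ℝ (Spt g)).extremePoints ℝ ⊆ Spt (f * g) := by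
  intro v hv
  obtain ⟨hvmem, hext⟩ := mem_extremePoints.1 hv
  obtain ⟨a, haP, b, hbQ, rfl⟩ := hvmem
  have huniq : ∀ a' ∈ convexHull ℝ (Spt f), ∀ b' ∈ convexHull ℝ (Spt g),
      a' + b' = a + b → a' = a ∧ b' = b := by
    intro a' ha' b' hb' hab
    have key : (1/2 : ℝ) • (a' + b) + (1/2 : ℝ) • (a + b') = a + b := by
      have h2 : (1/2 : ℝ) • (a' + b) + (1/2 : ℝ) • (a + b') =
          (1/2 : ℝ) • (a' + b') + (1/2 : ℝ) • (a + b) := by module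
      rw [h2, hab]; module
    have hmid : a + b ∈ openSegment ℝ (a' + b) (a + b') :=
      ⟨1/2, 1/2, by norm_num, by norm_num, by norm_num, key⟩
    obtain ⟨e1, e2⟩ := hext _ ⟨a', ha', b, hbQ, rfl⟩ _ ⟨a, haP, b', hb', rfl⟩ hmid
    exact ⟨add_right_cancel e1, add_left_cancel e2⟩
  have haext : a ∈ (convexHull ℝ (Spt f)).extremePoints ℝ := by
    refine mem_extremePoints.2 ⟨haP, fun x1 hx1 x2 hx2 hseg => ?_⟩
    obtain ⟨c, d, hc, hd, hcd, hsum⟩ := hseg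
    have hmem : a + b ∈ openSegment ℝ (x1 + b) (x2 + b) := by
      refine ⟨c, d, hc, hd, hcd, ?_⟩
      have : c • (x1 + b) + d • (x2 + b) = (c • x1 + d • x2) + (c + d) • b := by module
      rw [this, hsum, hcd, one_smul]
    obtain ⟨e1, e2⟩ := hext _ ⟨x1, hx1, b, hbQ, rfl⟩ _ ⟨x2, hx2, b, hbQ, rfl⟩ hmem
    exact ⟨add_right_cancel e1, add_right_cancel e2⟩
  have hbext : b ∈ (convexHull ℝ (Spt g)).extremePoints ℝ := by
    refine mem_extremePoints.2 ⟨hbQ, fun x1 hx1 x2 hx2 hseg => ?_⟩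
    obtain ⟨c, d, hc, hd, hcd, hsum⟩ := hseg
    have hmem : a + b ∈ openSegment ℝ (a + x1) (a + x2) := by
      refine ⟨c, d, hc, hd, hcd, ?_⟩
      have : c • (a + x1) + d • (a + x2) = (c + d) • a + (c • x1 + d • x2) := by module
      rw [this, hsum, hcd, one_smul]
    obtain ⟨e1, e2⟩ := hext _ ⟨a, haP, x1, hx1, rfl⟩ _ ⟨a, haP, x2, hx2, rfl⟩ hmem
    exact ⟨add_left_cancel e1, add_left_cancel e2⟩
  obtain ⟨m₀, hm₀, rfl⟩ := extremePoints_convexHull_subset haext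
  obtain ⟨n₀, hn₀, rfl⟩ := extremePoints_convexHull_subset hbext
  rw [Finset.mem_coe, mem_support_iff] at hm₀ hn₀
  have hcoeff : (f * g).coeff (m₀ + n₀) = f.coeff m₀ * g.coeff n₀ := by
    rw [coeff_mul]
    refine Finset.sum_eq_single_of_mem (m₀, n₀) (Finset.HasAntidiagonal.mem_antidiagonal.2 rfl) ?_
    rintro ⟨m, n⟩ hmem hne
    by_contra h
    obtain ⟨hfm, hgn⟩ := mul_ne_zero_iff.1 h
    have hmn : m + n = m₀ + n₀ := Finset.HasAntidiagonal.mem_antidiagonal.1 hmem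
    have hpt : toPt m + toPt n = toPt m₀ + toPt n₀ := by
      rw [← toPt_add, ← toPt_add, hmn]
    obtain ⟨e1, e2⟩ := huniq (toPt m)
      (subset_convexHull ℝ _ ⟨m, by simpa [mem_support_iff] using hfm, rfl⟩)
      (toPt n) (subset_convexHull ℝ _ ⟨n, by simpa [mem_support_iff] using hgn, rfl⟩) hpt
    exact hne (Prod.ext (toPt_inj e1) (toPt_inj e2))
  refine ⟨m₀ + n₀, ?_, (toPt_add m₀ n₀)⟩
  simpa [mem_support_iff, hcoeff] using mul_ne_zero hm₀ hn₀

/-- The Minkowski sum of the Newton polytopes is contained in the Newton polytope of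
the product. -/
lemma hull_sum_sub (f g : P2) :
    convexHull ℝ (Spt f) + convexHull ℝ (Spt g) ⊆ convexHull ℝ (Spt (f * g)) := by
  have hcf : IsCompact (convexHull ℝ (Spt f)) :=
    ((f.support.finite_toSet).image toPt).isCompact_convexHull ℝ
  have hcg : IsCompact (convexHull ℝ (Spt g)) :=
    ((g.support.finite_toSet).image toPt).isCompact_convexHull ℝ
  have hK : IsCompact (convexHull ℝ (Spt f) + convexHull ℝ (Spt g)) := hcf.add hcg
  have hconv : Convex ℝ (convexHull ℝ (Spt f) + convexHull ℝ (Spt g)) :=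
    (convex_convexHull ℝ _).add (convex_convexHull ℝ _)
  have hclosed : IsClosed (convexHull ℝ (Spt (f * g))) :=
    ((((f * g).support.finite_toSet).image toPt).isCompact_convexHull ℝ).isClosed
  calc convexHull ℝ (Spt f) + convexHull ℝ (Spt g)
      = closure (convexHull ℝ (((convexHull ℝ (Spt f) + convexHull ℝ (Spt g))).extremePoints ℝ)) :=
        (closure_convexHull_extremePoints hK hconv).symm
    _ ⊆ closure (convexHull ℝ (Spt (f * g))) :=
        closure_mono (convexHull_mono (extreme_mem_spt f g))
    _ = convexHull ℝ (Spt (f * g)) := hclosed.closure_eq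

lemma sum_spt_subset (f g : P2) : Spt f + Spt g ⊆ newton (f * g) := by
  refine Set.Subset.trans ?_ (Set.Subset.trans (hull_sum_sub f g) ?_)
  · exact Set.add_subset_add (subset_convexHull ℝ _) (subset_convexHull ℝ _)
  · rw [newton_eq]
    exact convexHull_mono Set.subset_union_right

/-- Three-point convexity argument. -/
lemma tri {N : Set (ℝ × ℝ)} (hN : Convex ℝ N) (h0 : (0 : ℝ × ℝ) ∈ N) {a1 a2 α β : ℝ}
    (ha1 : 0 ≤ a1) (ha2 : 0 ≤ a2) (hα : 0 ≤ α) (hβ : 0 ≤ β) (hpos : 0 < α ∨ 0 < β)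
    (hp : ((a1 + α, a2) : ℝ × ℝ) ∈ N) (hq : ((a1, a2 + β) : ℝ × ℝ) ∈ N) :
    ((a1, a2) : ℝ × ℝ) ∈ N := by
  set D : ℝ := a1 * β + α * a2 + α * β with hD
  have hDnn : 0 ≤ D := by positivity
  rcases hDnn.lt_or_eq with hDpos | hDzero
  · have hD0 : D ≠ 0 := ne_of_gt hDpos
    have hsum : α * β / D + a1 * β / D + α * a2 / D = 1 := by
      field_simp
      rw [hD]; ring
    have := hN.sum_mem (t := (Finset.univ : Finset (Fin 3)))
      (w := ![α * β / D, a1 * β / D, α * a2 / D])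
      (z := ![(0 : ℝ × ℝ), (a1 + α, a2), (a1, a2 + β)])
      (by intro i _; fin_cases i <;> · simp; positivity)
      (by simp [Fin.sum_univ_three]; linarith)
      (by intro i _; fin_cases i <;> simpa)
    rw [Fin.sum_univ_three] at this
    convert this using 1
    simp only [Matrix.cons_val_zero, Matrix.cons_val_one, Matrix.head_cons, smul_zero,
      Matrix.cons_val_two, Matrix.tail_cons, Prod.smul_mk, smul_eq_mul, zero_add,
      Prod.mk_add_mk]
    rw [Prod.mk.injEq]
    constructor <;> · field_simp; ring
  · have hαβ : α * β = 0 := by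
      nlinarith [mul_nonneg ha1 hβ, mul_nonneg hα ha2, mul_nonneg hα hβ]
    rcases hpos with hαp | hβp
    · have hβ0 : β = 0 := by
        rcases mul_eq_zero.1 hαβ with h | h
        · exact absurd h (ne_of_gt hαp)
        · exact h
      rw [hβ0, add_zero] at hq
      exact hq
    · have hα0 : α = 0 := by
        rcases mul_eq_zero.1 hαβ with h | h
        · exact h
        · exact absurd h (ne_of_gt hβp)
      rw [hα0, add_zero] at hp
      exact hp

lemma spt_subset_newton (f g : P2) (hg : QuasiConvenient g) : Spt f ⊆ newton (f * g) := by
  rintro x ⟨m, hm, rfl⟩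
  rw [Finset.mem_coe] at hm
  obtain ⟨⟨αg, hαg⟩, ⟨βg, hβg⟩⟩ := hg
  have hα_supp : Finsupp.single 0 αg ∈ g.support := mem_support_iff.2 hαg
  have hβ_supp : Finsupp.single 1 βg ∈ g.support := mem_support_iff.2 hβg
  by_cases hz : αg = 0 ∧ βg = 0
  · have h0g : toPt (Finsupp.single 0 αg) = 0 := by
      rw [toPt_single0, hz.1]; simp
    have : toPt m = toPt m + toPt (Finsupp.single 0 αg) := by rw [h0g, add_zero]
    rw [this]
    exact sum_spt_subset f g ⟨toPt m, ⟨m, hm, rfl⟩, toPt (Finsupp.single 0 αg),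
      ⟨Finsupp.single 0 αg, hα_supp, rfl⟩, rfl⟩
  · have hpos : 0 < (αg : ℝ) ∨ 0 < (βg : ℝ) := by
      rcases Decidable.not_and_iff_or_not.1 hz with h | h
      · exact Or.inl (by exact_mod_cast Nat.pos_of_ne_zero h)
      · exact Or.inr (by exact_mod_cast Nat.pos_of_ne_zero h)
    have hp : (((m 0 : ℝ) + (αg : ℝ), (m 1 : ℝ)) : ℝ × ℝ) ∈ newton (f * g) := by
      have he : (((m 0 : ℝ) + (αg : ℝ), (m 1 : ℝ)) : ℝ × ℝ) =
          toPt m + toPt (Finsupp.single 0 αg) := by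
        rw [toPt_single0, toPt, Prod.mk_add_mk, add_zero]
      rw [he]
      exact sum_spt_subset f g ⟨toPt m, ⟨m, hm, rfl⟩, _, ⟨_, hα_supp, rfl⟩, rfl⟩
    have hq : (((m 0 : ℝ), (m 1 : ℝ) + (βg : ℝ)) : ℝ × ℝ) ∈ newton (f * g) := by
      have he : (((m 0 : ℝ), (m 1 : ℝ) + (βg : ℝ)) : ℝ × ℝ) =
          toPt m + toPt (Finsupp.single 1 βg) := by
        rw [toPt_single1, toPt, Prod.mk_add_mk, add_zero]
      rw [he]
      exact sum_spt_subset f g ⟨toPt m, ⟨m, hm, rfl⟩, _, ⟨_, hβ_supp, rfl⟩, rfl⟩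
    exact tri (convex_newton (f * g)) (zero_mem_newton (f * g)) (Nat.cast_nonneg _)
      (Nat.cast_nonneg _) (Nat.cast_nonneg _) (Nat.cast_nonneg _) hpos hp hq

lemma newton_add_subset (f g : P2) (hf : QuasiConvenient f) (hg : QuasiConvenient g) :
    newton f + newton g ⊆ newton (f * g) := by
  have hfN : Spt f ⊆ newton (f * g) := spt_subset_newton f g hg
  have hgN : Spt g ⊆ newton (f * g) := by
    rw [mul_comm]
    exact spt_subset_newton g f hf
  rw [newton_eq f, newton_eq g, ← convexHull_add]
  refine convexHull_min ?_ (convex_newton (f * g))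
  rintro z ⟨x, hx, y, hy, rfl⟩
  rcases hx with hx0 | hxS <;> rcases hy with hy0 | hyS
  · rw [Set.mem_singleton_iff] at hx0 hy0
    subst hx0; subst hy0
    simpa using zero_mem_newton (f * g)
  · rw [Set.mem_singleton_iff] at hx0
    subst hx0
    simpa using hgN hyS
  · rw [Set.mem_singleton_iff] at hy0
    subst hy0
    simpa using hfN hxS
  · exact sum_spt_subset f g ⟨x, hxS, y, hyS, rfl⟩

lemma line_null (c : ℝ) : volume {p : ℝ × ℝ | p.1 = c} = 0 := by
  have h : {p : ℝ × ℝ | p.1 = c} = {c} ×ˢ (Set.univ : Set ℝ) := by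
    ext ⟨x, y⟩; simp [Set.mem_prod, eq_comm]
  rw [h, show (volume : Measure (ℝ × ℝ)) = (volume : Measure ℝ).prod volume from rfl,
    Measure.prod_prod]
  simp

lemma vol_add_superadd {A B : Set (ℝ × ℝ)} (hA : IsCompact A) (hB : IsCompact B)
    (hAne : A.Nonempty) (hBne : B.Nonempty) :
    volume A + volume B ≤ volume (A + B) := by
  obtain ⟨a, haA, ha⟩ := hA.exists_isMaxOn hAne (continuous_fst.continuousOn)
  obtain ⟨b, hbB, hb⟩ := hB.exists_isMinOn hBne (continuous_fst.continuousOn)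
  set S := b +ᵥ A with hS
  set T := a +ᵥ B with hT
  have hSsub : S ⊆ A + B := by
    rintro x ⟨y, hy, rfl⟩
    exact ⟨y, hy, b, hbB, add_comm y b⟩
  have hTsub : T ⊆ A + B := by
    rintro x ⟨y, hy, rfl⟩; exact ⟨a, haA, y, hy, rfl⟩
  have hST : S ∩ T ⊆ {p : ℝ × ℝ | p.1 = a.1 + b.1} := by
    rintro x ⟨⟨y, hy, rfl⟩, ⟨z, hz, hzx⟩⟩
    have h1 : y.1 ≤ a.1 := ha hy
    have h2 : b.1 ≤ z.1 := hb hz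
    have h3 : a.1 + z.1 = b.1 + y.1 := congrArg Prod.fst hzx
    show (b + y).1 = a.1 + b.1
    rw [Prod.fst_add]; linarith
  have hTm : MeasurableSet T := (hB.vadd a).measurableSet
  have hint : volume (S ∩ T) = 0 := measure_mono_null hST (line_null _)
  have hunion : volume (S ∪ T) = volume S + volume T := by
    have h := measure_union_add_inter (μ := volume) S hTm
    rw [hint, add_zero] at h
    exact h
  calc volume A + volume B = volume S + volume T := by
        rw [hS, hT, measure_vadd, measure_vadd]
      _ = volume (S ∪ T) := hunion.symm
      _ ≤ volume (A + B) := measure_mono (Set.union_subset hSsub hTsub)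

/-- For quasi-convenient polynomials of positive degree, `ν∞(f, g) ≥ 0`. -/
theorem stmt4 (f g : P2) (hf : QuasiConvenient f) (hg : QuasiConvenient g)
    (hdf : 0 < f.totalDegree) (hdg : 0 < g.totalDegree) :
    0 ≤ nuInf f g := by
  have hvol : volume (newton f) + volume (newton g) ≤ volume (newton (f * g)) :=
    le_trans
      (vol_add_superadd (newton_isCompact f) (newton_isCompact g)
        ⟨0, zero_mem_newton f⟩ ⟨0, zero_mem_newton g⟩)
      (measure_mono (newton_add_subset f g hf hg))
  have hffin : volume (newton f) ≠ ⊤ := (newton_isCompact f).measure_lt_top.ne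
  have hgfin : volume (newton g) ≠ ⊤ := (newton_isCompact g).measure_lt_top.ne
  have hfgfin : volume (newton (f * g)) ≠ ⊤ := (newton_isCompact (f * g)).measure_lt_top.ne
  have harea : area (newton f) + area (newton g) ≤ area (newton (f * g)) := by
    rw [area, area, area, ← ENNReal.toReal_add hffin hgfin]
    exact ENNReal.toReal_mono hfgfin hvol
  rw [nuInf]
  linarith
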